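/- Let n ≥ 1, σ₁,…,σ_{n+1} > 0 and x₁ < … < x_n. Let A(κ) be the 2n×2n matrix of the infinite-domain n-interface system described below. Then A factors as A(κ) = A^L(κ) A^M(κ) where A^L(κ) is the diagonal matrix diag(e^{−iκx₁/σ₁},…,e^{−iκx_n/σ_n}, e^{iκx₁/σ₂},…,e^{iκx_n/σ_{n+1}}), and every entry of A^M(κ) is of the form c κ^a e^{iκ b} with a ∈ {0,1}, c ∈ ℂ constant, and b ≥ 0 a real constant depending on the entry (so that e^{iκb} is bounded for Im κ ≥ 0). Consequently |det A^M(κ)| = O(|κ|^{2n}) as |κ| → ∞ in the closed upper half plane. -/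

import Mathlib

open Complex Matrix

/-- The `2n × 2n` coefficient matrix `A(κ)` of the global-relation system for the heat
equation on `ℝ` with `n` interfaces at `x 0 < … < x (n-1)` and conductivities `(σ j)²`
on the `j`-th layer (`σ j`, `j : Fin (n+1)`, is the paper's `σ_{j+1}`; `x j` is the
paper's `x_{j+1}`).  Rows `inl j` are the global relations of layers `1,…,n` evaluated
at `+κ`; rows `inr j` those of layers `2,…,n+1` evaluated at `−κ`; columns `inl`/`inr`
correspond to the unknowns `g₀⁽¹⁾,…,g₀⁽ⁿ⁾` / `g₁⁽¹⁾,…,g₁⁽ⁿ⁾`. -/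
noncomputable def interfaceMatrix (n : ℕ) (σ : Fin (n + 1) → ℝ) (x : Fin n → ℝ) (κ : ℂ) :
    Matrix (Fin n ⊕ Fin n) (Fin n ⊕ Fin n) ℂ :=
  fun i j =>
    match i, j with
    | .inl j, .inl l =>
        if l = j then (I * κ / (σ j.castSucc : ℝ)) *
          Complex.exp (-I * κ * (x j : ℝ) / (σ j.castSucc : ℝ))
        else if (l : ℕ) + 1 = (j : ℕ) then (-I * κ / (σ j.castSucc : ℝ)) *
          Complex.exp (-I * κ * (x l : ℝ) / (σ j.castSucc : ℝ))
        else 0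
    | .inl j, .inr l =>
        if l = j then Complex.exp (-I * κ * (x j : ℝ) / (σ j.castSucc : ℝ))
        else if (l : ℕ) + 1 = (j : ℕ) then
          (-((σ l.castSucc : ℝ) : ℂ) ^ 2 / ((σ j.castSucc : ℝ) : ℂ) ^ 2) *
            Complex.exp (-I * κ * (x l : ℝ) / (σ j.castSucc : ℝ))
        else 0
    | .inr j, .inl l =>
        if l = j then (I * κ / (σ j.succ : ℝ)) *
          Complex.exp (I * κ * (x j : ℝ) / (σ j.succ : ℝ))
        else if (j : ℕ) + 1 = (l : ℕ) then (-I * κ / (σ j.succ : ℝ)) *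
          Complex.exp (I * κ * (x l : ℝ) / (σ j.succ : ℝ))
        else 0
    | .inr j, .inr l =>
        if l = j then (-((σ j.castSucc : ℝ) : ℂ) ^ 2 / ((σ j.succ : ℝ) : ℂ) ^ 2) *
          Complex.exp (I * κ * (x j : ℝ) / (σ j.succ : ℝ))
        else if (j : ℕ) + 1 = (l : ℕ) then
          Complex.exp (I * κ * (x l : ℝ) / (σ j.succ : ℝ))
        else 0

/-- The diagonal matrix `A^L(κ) = diag(e^{−iκx₁/σ₁},…,e^{−iκxₙ/σₙ},
e^{iκx₁/σ₂},…,e^{iκxₙ/σ_{n+1}})`. -/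
noncomputable def interfaceMatrixL (n : ℕ) (σ : Fin (n + 1) → ℝ) (x : Fin n → ℝ) (κ : ℂ) :
    Matrix (Fin n ⊕ Fin n) (Fin n ⊕ Fin n) ℂ :=
  Matrix.diagonal (Sum.elim
    (fun j : Fin n => Complex.exp (-I * κ * (x j : ℝ) / (σ j.castSucc : ℝ)))
    (fun j : Fin n => Complex.exp (I * κ * (x j : ℝ) / (σ j.succ : ℝ))))


private lemma exp_mul_aux (u v c : ℂ) :
    Complex.exp u * (c * Complex.exp v) = c * Complex.exp (u + v) := by
  rw [Complex.exp_add]; ring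

private lemma exp_mul_aux' (u v : ℂ) :
    Complex.exp u * Complex.exp v = Complex.exp (u + v) := (Complex.exp_add u v).symm

/-- Structural factorization `A(κ) = A^L(κ) A^M(κ)` of the `n`-interface matrix:
every entry of `A^M(κ)` has the form `c κ^a e^{iκb}` with `a ∈ {0,1}`, `c ∈ ℂ`
constant, and `b ≥ 0` real (so `e^{iκb}` is bounded for `Im κ ≥ 0`); consequently
`|det A^M(κ)| = O(|κ|^{2n})` as `|κ| → ∞` in the closed upper half plane. -/
theorem interfaceMatrix_factorization
    (n : ℕ) (hn : 1 ≤ n) (σ : Fin (n + 1) → ℝ) (hσ : ∀ j, 0 < σ j)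
    (x : Fin n → ℝ) (hx : StrictMono x) :
    ∃ AM : ℂ → Matrix (Fin n ⊕ Fin n) (Fin n ⊕ Fin n) ℂ,
      (∀ κ, interfaceMatrix n σ x κ = interfaceMatrixL n σ x κ * AM κ) ∧
      (∀ i j : Fin n ⊕ Fin n, ∃ (c : ℂ) (a : ℕ) (b : ℝ), (a = 0 ∨ a = 1) ∧ 0 ≤ b ∧
        ∀ κ, AM κ i j = c * κ ^ a * Complex.exp (I * κ * (b : ℂ))) ∧
      (∃ C R : ℝ, 0 < C ∧ ∀ κ : ℂ, 0 ≤ κ.im → R ≤ ‖κ‖ →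
        ‖(AM κ).det‖ ≤ C * ‖κ‖ ^ (2 * n)) :=  by
  classical
  set AM : ℂ → Matrix (Fin n ⊕ Fin n) (Fin n ⊕ Fin n) ℂ := fun κ i j =>
    (Sum.elim
      (fun j' : Fin n => Complex.exp (I * κ * (x j' : ℝ) / (σ j'.castSucc : ℝ)))
      (fun j' : Fin n => Complex.exp (-I * κ * (x j' : ℝ) / (σ j'.succ : ℝ))) i) *
      interfaceMatrix n σ x κ i j with hAM
  have hfact : ∀ κ, interfaceMatrix n σ x κ = interfaceMatrixL n σ x κ * AM κ := by
    intro κ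
    ext i j
    rw [interfaceMatrixL, Matrix.diagonal_mul, hAM]
    cases i with
    | inl j' =>
        simp only [Sum.elim_inl, ← mul_assoc, ← Complex.exp_add]
        rw [show -I * κ * (x j' : ℝ) / (σ j'.castSucc : ℝ) +
            I * κ * (x j' : ℝ) / (σ j'.castSucc : ℝ) = 0 by ring, Complex.exp_zero, one_mul]
    | inr j' =>
        simp only [Sum.elim_inr, ← mul_assoc, ← Complex.exp_add]
        rw [show I * κ * (x j' : ℝ) / (σ j'.succ : ℝ) +
            -I * κ * (x j' : ℝ) / (σ j'.succ : ℝ) = 0 by ring, Complex.exp_zero, one_mul]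
  have hform : ∀ i j : Fin n ⊕ Fin n, ∃ (c : ℂ) (a : ℕ) (b : ℝ), (a = 0 ∨ a = 1) ∧ 0 ≤ b ∧
      ∀ κ, AM κ i j = c * κ ^ a * Complex.exp (I * κ * (b : ℂ)) := by
    intro i j
    have hσne : ∀ k : Fin (n + 1), ((σ k : ℝ) : ℂ) ≠ 0 := fun k => by
      exact_mod_cast (hσ k).ne'
    cases i with
    | inl j' =>
      cases j with
      | inl l =>
        by_cases h1 : l = j'
        · refine ⟨I / (σ j'.castSucc : ℝ), 1, 0, Or.inr rfl, le_refl _, fun κ => ?_⟩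
          simp only [hAM, interfaceMatrix, Sum.elim_inl, if_pos h1, exp_mul_aux]
          rw [show I * κ * (x j' : ℝ) / (σ j'.castSucc : ℝ) +
              -I * κ * (x j' : ℝ) / (σ j'.castSucc : ℝ) = I * κ * ((0 : ℝ) : ℂ) by
            push_cast; ring]
          ring
        · by_cases h2 : (l : ℕ) + 1 = (j' : ℕ)
          · have hlt : x l ≤ x j' := (hx (by omega : l < j')).le
            refine ⟨-I / (σ j'.castSucc : ℝ), 1, (x j' - x l) / σ j'.castSucc, Or.inr rfl,
              div_nonneg (by linarith) (hσ _).le, fun κ => ?_⟩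
            simp only [hAM, interfaceMatrix, Sum.elim_inl, if_neg h1, if_pos h2, exp_mul_aux]
            rw [show I * κ * (x j' : ℝ) / (σ j'.castSucc : ℝ) +
                -I * κ * (x l : ℝ) / (σ j'.castSucc : ℝ) =
                I * κ * (((x j' - x l) / σ j'.castSucc : ℝ) : ℂ) by push_cast; ring]
            ring
          · refine ⟨0, 0, 0, Or.inl rfl, le_refl _, fun κ => ?_⟩
            simp [hAM, interfaceMatrix, if_neg h1, if_neg h2]
      | inr l =>
        by_cases h1 : l = j'
        · refine ⟨1, 0, 0, Or.inl rfl, le_refl _, fun κ => ?_⟩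
          simp only [hAM, interfaceMatrix, Sum.elim_inl, if_pos h1, exp_mul_aux']
          rw [show I * κ * (x j' : ℝ) / (σ j'.castSucc : ℝ) +
              -I * κ * (x j' : ℝ) / (σ j'.castSucc : ℝ) = I * κ * ((0 : ℝ) : ℂ) by
            push_cast; ring]
          ring
        · by_cases h2 : (l : ℕ) + 1 = (j' : ℕ)
          · have hlt : x l ≤ x j' := (hx (by omega : l < j')).le
            refine ⟨-((σ l.castSucc : ℝ) : ℂ) ^ 2 / ((σ j'.castSucc : ℝ) : ℂ) ^ 2, 0,
              (x j' - x l) / σ j'.castSucc, Or.inl rfl,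
              div_nonneg (by linarith) (hσ _).le, fun κ => ?_⟩
            simp only [hAM, interfaceMatrix, Sum.elim_inl, if_neg h1, if_pos h2, exp_mul_aux]
            rw [show I * κ * (x j' : ℝ) / (σ j'.castSucc : ℝ) +
                -I * κ * (x l : ℝ) / (σ j'.castSucc : ℝ) =
                I * κ * (((x j' - x l) / σ j'.castSucc : ℝ) : ℂ) by push_cast; ring]
            ring
          · refine ⟨0, 0, 0, Or.inl rfl, le_refl _, fun κ => ?_⟩
            simp [hAM, interfaceMatrix, if_neg h1, if_neg h2]
    | inr j' =>
      cases j with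
      | inl l =>
        by_cases h1 : l = j'
        · refine ⟨I / (σ j'.succ : ℝ), 1, 0, Or.inr rfl, le_refl _, fun κ => ?_⟩
          simp only [hAM, interfaceMatrix, Sum.elim_inr, if_pos h1, exp_mul_aux]
          rw [show -I * κ * (x j' : ℝ) / (σ j'.succ : ℝ) +
              I * κ * (x j' : ℝ) / (σ j'.succ : ℝ) = I * κ * ((0 : ℝ) : ℂ) by
            push_cast; ring]
          ring
        · by_cases h2 : (j' : ℕ) + 1 = (l : ℕ)
          · have hlt : x j' ≤ x l := (hx (by omega : j' < l)).le
            refine ⟨-I / (σ j'.succ : ℝ), 1, (x l - x j') / σ j'.succ, Or.inr rfl,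
              div_nonneg (by linarith) (hσ _).le, fun κ => ?_⟩
            simp only [hAM, interfaceMatrix, Sum.elim_inr, if_neg h1, if_pos h2, exp_mul_aux]
            rw [show -I * κ * (x j' : ℝ) / (σ j'.succ : ℝ) +
                I * κ * (x l : ℝ) / (σ j'.succ : ℝ) =
                I * κ * (((x l - x j') / σ j'.succ : ℝ) : ℂ) by push_cast; ring]
            ring
          · refine ⟨0, 0, 0, Or.inl rfl, le_refl _, fun κ => ?_⟩
            simp [hAM, interfaceMatrix, if_neg h1, if_neg h2]
      | inr l =>
        by_cases h1 : l = j'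
        · refine ⟨-((σ j'.castSucc : ℝ) : ℂ) ^ 2 / ((σ j'.succ : ℝ) : ℂ) ^ 2, 0, 0,
            Or.inl rfl, le_refl _, fun κ => ?_⟩
          simp only [hAM, interfaceMatrix, Sum.elim_inr, if_pos h1, exp_mul_aux]
          rw [show -I * κ * (x j' : ℝ) / (σ j'.succ : ℝ) +
              I * κ * (x j' : ℝ) / (σ j'.succ : ℝ) = I * κ * ((0 : ℝ) : ℂ) by
            push_cast; ring]
          ring
        · by_cases h2 : (j' : ℕ) + 1 = (l : ℕ)
          · have hlt : x j' ≤ x l := (hx (by omega : j' < l)).le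
            refine ⟨1, 0, (x l - x j') / σ j'.succ, Or.inl rfl,
              div_nonneg (by linarith) (hσ _).le, fun κ => ?_⟩
            simp only [hAM, interfaceMatrix, Sum.elim_inr, if_neg h1, if_pos h2, exp_mul_aux']
            rw [show -I * κ * (x j' : ℝ) / (σ j'.succ : ℝ) +
                I * κ * (x l : ℝ) / (σ j'.succ : ℝ) =
                I * κ * (((x l - x j') / σ j'.succ : ℝ) : ℂ) by push_cast; ring]
            ring
          · refine ⟨0, 0, 0, Or.inl rfl, le_refl _, fun κ => ?_⟩
            simp [hAM, interfaceMatrix, if_neg h1, if_neg h2]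
  refine ⟨AM, hfact, hform, ?_⟩
  choose c a b ha hb hc using hform
  obtain ⟨C0, hC0⟩ := Finite.exists_le
    (fun p : (Fin n ⊕ Fin n) × (Fin n ⊕ Fin n) => ‖c p.1 p.2‖)
  set M : ℝ := max C0 1 with hMdef
  have hM1 : (1 : ℝ) ≤ M := le_max_right _ _
  have hM0 : (0 : ℝ) < M := lt_of_lt_of_le one_pos hM1
  refine ⟨(Nat.factorial (2 * n) : ℝ) * M ^ (2 * n), 1, by positivity, fun κ him hκ => ?_⟩
  have hentry : ∀ i j, ‖AM κ i j‖ ≤ M * ‖κ‖ := by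
    intro i j
    rw [hc i j κ, norm_mul, norm_mul]
    have hexp : ‖Complex.exp (I * κ * ((b i j : ℝ) : ℂ))‖ ≤ 1 := by
      rw [Complex.norm_exp]
      have hre : (I * κ * ((b i j : ℝ) : ℂ)).re = -κ.im * b i j := by
        simp [Complex.mul_re, Complex.mul_im]
      rw [hre]
      have := hb i j
      calc Real.exp (-κ.im * b i j) ≤ Real.exp 0 :=
            Real.exp_le_exp.mpr (by nlinarith)
        _ = 1 := Real.exp_zero
    have hcle : ‖c i j‖ ≤ M := by
      calc ‖c i j‖ = ‖c i j‖ := rfl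
        _ ≤ C0 := hC0 ⟨i, j⟩
        _ ≤ M := le_max_left _ _
    have hpow : ‖κ ^ a i j‖ ≤ ‖κ‖ := by
      rw [norm_pow]
      rcases ha i j with h | h
      · rw [h, pow_zero]
        exact hκ
      · rw [h, pow_one]
    calc ‖c i j‖ * ‖κ ^ a i j‖ *
          ‖Complex.exp (I * κ * ((b i j : ℝ) : ℂ))‖
        ≤ ‖c i j‖ * ‖κ ^ a i j‖ * 1 := by
          apply mul_le_mul_of_nonneg_left hexp; positivity
      _ = ‖c i j‖ * ‖κ ^ a i j‖ := mul_one _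
      _ ≤ M * ‖κ‖ := mul_le_mul hcle hpow (by positivity) hM0.le
  have hcard : Fintype.card (Fin n ⊕ Fin n) = 2 * n := by
    simp [Fintype.card_sum, two_mul]
  calc ‖(AM κ).det‖ = ‖(AM κ).det‖ := rfl
    _ ≤ Nat.factorial (Fintype.card (Fin n ⊕ Fin n)) •
        (M * ‖κ‖) ^ Fintype.card (Fin n ⊕ Fin n) := Matrix.det_le (abv := IsAbsoluteValue.toAbsoluteValue (norm : ℂ → ℝ)) hentry
    _ = (Nat.factorial (2 * n) : ℝ) * (M * ‖κ‖) ^ (2 * n) := by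
        rw [hcard, nsmul_eq_mul]
    _ = (Nat.factorial (2 * n) : ℝ) * M ^ (2 * n) * ‖κ‖ ^ (2 * n) := by
        rw [mul_pow]; ring
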